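/- For any d×d density matrix ρ, the modified trace distance measure of coherence satisfies C'_tr(ρ) ≥ 1 − Σ_i ((√ρ)_{ii})², where (√ρ)_{ii} are the diagonal entries of the positive semidefinite square root of ρ; i.e., for every λ ≥ 0 and every diagonal density matrix δ one has ‖ρ − λδ‖_tr ≥ 1 − Σ_i ((√ρ)_{ii})². -/

import Mathlib

open Matrix
open scoped ComplexOrder

/-- The positive semidefinite square root of a positive semidefinite matrix
(removed from Mathlib; restored here with its old definition). -/
noncomputable def Matrix.PosSemidef.sqrt {n 𝕜 : Type*} [Fintype n] [DecidableEq n] [RCLike 𝕜]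
    {A : Matrix n n 𝕜} (hA : A.PosSemidef) : Matrix n n 𝕜 :=
  hA.1.eigenvectorUnitary.1 * diagonal ((↑) ∘ (√·) ∘ hA.1.eigenvalues) *
  (star hA.1.eigenvectorUnitary : Matrix n n 𝕜)

/-- The trace norm of a matrix `A`: `‖A‖_tr = Tr √(AᴴA)`. -/
noncomputable def traceNorm {d : ℕ} (A : Matrix (Fin d) (Fin d) ℂ) : ℝ :=
  ((Matrix.posSemidef_conjTranspose_mul_self A).sqrt.trace).re

/-- The Hilbert–Schmidt norm of a matrix `A`: `‖A‖_HS = √(Tr(AᴴA))`. -/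
noncomputable def hsNorm {d : ℕ} (A : Matrix (Fin d) (Fin d) ℂ) : ℝ :=
  Real.sqrt (((Aᴴ * A).trace).re)

namespace PS

/-- sign function with `psgn 0 = 1`, so that `psgn x * psgn x = 1`. -/
noncomputable def psgn (x : ℝ) : ℝ := if 0 ≤ x then 1 else -1

lemma psgn_mul_self : (fun x => psgn x * psgn x) = fun _ : ℝ => (1:ℝ) := by
  funext x; by_cases h : 0 ≤ x <;> simp [psgn, h]

lemma psgn_mul_abs : (fun x => psgn x * |x|) = fun x : ℝ => x := by
  funext x
  by_cases h : 0 ≤ x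
  · simp [psgn, h, abs_of_nonneg h]
  · simp [psgn, h, abs_of_neg (lt_of_not_ge h)]

lemma id_mul_psgn : (fun x : ℝ => x * psgn x) = fun x : ℝ => |x| := by
  funext x
  by_cases h : 0 ≤ x
  · simp [psgn, h, abs_of_nonneg h]
  · simp [psgn, h, abs_of_neg (lt_of_not_ge h)]

lemma psgn_mul_id : (fun x : ℝ => psgn x * x) = fun x : ℝ => |x| := by
  funext x
  by_cases h : 0 ≤ x
  · simp [psgn, h, abs_of_nonneg h]
  · simp [psgn, h, abs_of_neg (lt_of_not_ge h)]

lemma id_mul_ppart : (fun x : ℝ => x * max x 0) = fun x : ℝ => max x 0 * max x 0 := by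
  funext x
  rcases le_total x 0 with h | h
  · simp [max_eq_right h]
  · simp [max_eq_left h]

lemma id_mul_npart : (fun x : ℝ => x * max (-x) 0) = fun x : ℝ => -(max (-x) 0 * max (-x) 0) := by
  funext x
  rcases le_total x 0 with h | h
  · have : max (-x) 0 = -x := max_eq_left (by linarith)
    rw [this]; ring
  · have : max (-x) 0 = 0 := max_eq_right (by linarith)
    rw [this]; ring

lemma ppart_sub_npart : (fun x : ℝ => max x 0 - max (-x) 0) = fun x : ℝ => x := by
  funext x
  rcases le_total x 0 with h | h
  · rw [max_eq_right h, max_eq_left (by linarith)]; ring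
  · rw [max_eq_left h, max_eq_right (by linarith)]; ring

lemma ppart_add_npart : (fun x : ℝ => max x 0 + max (-x) 0) = fun x : ℝ => |x| := by
  funext x
  rcases le_total x 0 with h | h
  · rw [max_eq_right h, max_eq_left (by linarith), abs_of_nonpos h]; ring
  · rw [max_eq_left h, max_eq_right (by linarith), abs_of_nonneg h]; ring

variable {n : Type*} [Fintype n] [DecidableEq n]

section cfc
variable {A : Matrix n n ℂ} (hA : A.IsHermitian)

lemma cfc_mul (f g : ℝ → ℝ) :
    hA.cfc f * hA.cfc g = hA.cfc (fun x => f x * g x) := by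
  have key {a b c d e f : Matrix n n ℂ} : (a * b * c) * (d * e * f) = a * (b * (c * d) * e) * f := by
    simp only [mul_assoc]
  simp only [Matrix.IsHermitian.cfc, Unitary.conjStarAlgAut_apply, key, SetLike.coe_mem, Unitary.star_mul_self_of_mem, mul_one,
    diagonal_mul_diagonal]
  congr! with i
  simp

lemma cfc_one : hA.cfc (fun _ => 1) = 1 := by
  have : diagonal (RCLike.ofReal ∘ (fun _ : ℝ => (1:ℝ)) ∘ hA.eigenvalues) = (1 : Matrix n n ℂ) := by
    simp [Function.comp_def]
  simp only [Matrix.IsHermitian.cfc, Unitary.conjStarAlgAut_apply, this, mul_one]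
  exact Unitary.mul_star_self_of_mem (SetLike.coe_mem _)

lemma cfc_id : hA.cfc (fun x => x) = A := by
  rw [Matrix.IsHermitian.cfc, Unitary.conjStarAlgAut_apply]
  exact hA.spectral_theorem.symm

lemma cfc_sub (f g : ℝ → ℝ) :
    hA.cfc f - hA.cfc g = hA.cfc (fun x => f x - g x) := by
  simp only [Matrix.IsHermitian.cfc, Unitary.conjStarAlgAut_apply, ← sub_mul, ← mul_sub, ← diagonal_sub]
  congr! with i
  simp

lemma cfc_add (f g : ℝ → ℝ) :
    hA.cfc f + hA.cfc g = hA.cfc (fun x => f x + g x) := by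
  simp only [Matrix.IsHermitian.cfc, Unitary.conjStarAlgAut_apply, ← add_mul, ← mul_add, ← diagonal_add]
  congr! with i
  simp

lemma cfc_zero : hA.cfc (fun _ => 0) = 0 := by
  simp only [Matrix.IsHermitian.cfc, Unitary.conjStarAlgAut_apply]
  have : diagonal (RCLike.ofReal ∘ (fun _ : ℝ => (0:ℝ)) ∘ hA.eigenvalues) = (0 : Matrix n n ℂ) := by
    simp [Function.comp_def]
  rw [this, mul_zero, zero_mul]

lemma cfc_neg (f : ℝ → ℝ) :
    hA.cfc (fun x => -(f x)) = -(hA.cfc f) := by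
  have h := cfc_sub hA (fun _ => (0:ℝ)) f
  rw [cfc_zero hA, zero_sub] at h
  have h2 : (fun x : ℝ => (fun _ : ℝ => (0:ℝ)) x - f x) = (fun x => -(f x)) := by
    funext x; simp
  rw [h2] at h
  exact h.symm

lemma cfc_hermitian (f : ℝ → ℝ) : (hA.cfc f).IsHermitian := by
  rw [Matrix.IsHermitian.cfc, Unitary.conjStarAlgAut_apply, Matrix.IsHermitian, conjTranspose_mul, conjTranspose_mul,
    diagonal_conjTranspose, star_eq_conjTranspose, conjTranspose_conjTranspose, mul_assoc]
  congr!
  ext i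
  simp [Pi.star_def, Function.comp_def]

lemma cfc_posSemidef (f : ℝ → ℝ) (hf : ∀ x, 0 ≤ f x) : (hA.cfc f).PosSemidef := by
  rw [Matrix.IsHermitian.cfc, Unitary.conjStarAlgAut_apply]
  have hd : (diagonal (RCLike.ofReal ∘ f ∘ hA.eigenvalues) : Matrix n n ℂ).PosSemidef := by
    refine posSemidef_diagonal_iff.mpr fun i => ?_
    simpa using Complex.zero_le_real.mpr (hf _)
  have := hd.mul_mul_conjTranspose_same (hA.eigenvectorUnitary : Matrix n n ℂ)
  simpa [star_eq_conjTranspose] using this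

end cfc

lemma cfc_congr_eig {A : Matrix n n ℂ} (hA : A.IsHermitian) {f g : ℝ → ℝ}
    (h : ∀ i, f (hA.eigenvalues i) = g (hA.eigenvalues i)) : hA.cfc f = hA.cfc g := by
  simp only [Matrix.IsHermitian.cfc]
  congr 2
  funext i
  simp [h i]

lemma sqrt_eq_cfc' {A : Matrix n n ℂ} (hA : A.PosSemidef) : hA.sqrt = hA.1.cfc Real.sqrt := rfl

lemma _root_.Matrix.PosSemidef.posSemidef_sqrt {A : Matrix n n ℂ} (hA : A.PosSemidef) :
    hA.sqrt.PosSemidef := by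
  rw [sqrt_eq_cfc']
  exact cfc_posSemidef _ _ Real.sqrt_nonneg

lemma _root_.Matrix.PosSemidef.sqrt_mul_self {A : Matrix n n ℂ} (hA : A.PosSemidef) :
    hA.sqrt * hA.sqrt = A := by
  rw [sqrt_eq_cfc', cfc_mul]
  conv_rhs => rw [← cfc_id hA.1]
  exact cfc_congr_eig _ fun i => Real.mul_self_sqrt (hA.eigenvalues_nonneg i)

open scoped MatrixOrder in
lemma _root_.Matrix.PosSemidef.eq_sqrt_of_sq_eq {A B : Matrix n n ℂ} (hB : B.PosSemidef)
    {hA : A.PosSemidef} (h : B ^ 2 = A) : B = hA.sqrt := by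
  have e : hA.sqrt = CFC.sqrt A := by
    rw [CFC.sqrt_eq_cfc, cfc_nnreal_eq_real _ A hA.nonneg, hA.1.cfc_eq, sqrt_eq_cfc']
    congr 1
    funext x
    exact Real.sqrt.eq_1 x
  rw [e, eq_comm, CFC.sqrt_eq_iff A B hA.nonneg hB.nonneg, ← pow_two, h]

lemma diag_nonneg' {M : Matrix n n ℂ} (hM : M.PosSemidef) (i : n) : 0 ≤ M i i := by
  exact hM.diag_nonneg

lemma trace_re_nonneg {M : Matrix n n ℂ} (hM : M.PosSemidef) : 0 ≤ M.trace.re := by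
  have h2 : M.trace = ∑ i, M i i := rfl
  rw [h2, Complex.re_sum]
  exact Finset.sum_nonneg fun i _ => (Complex.le_def.mp (diag_nonneg' hM i)).1

lemma trace_mul_psd_re_nonneg {X Y : Matrix n n ℂ} (hX : X.PosSemidef) (hY : Y.PosSemidef) :
    0 ≤ ((X * Y).trace).re := by
  have hpsd : ((hX.sqrt)ᴴ * Y * hX.sqrt).PosSemidef := hY.conjTranspose_mul_mul_same hX.sqrt
  rw [hX.posSemidef_sqrt.1] at hpsd
  have h : (X * Y).trace = (hX.sqrt * Y * hX.sqrt).trace := by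
    conv_lhs => rw [← hX.sqrt_mul_self]
    rw [mul_assoc, trace_mul_comm]
  rw [h]
  exact trace_re_nonneg hpsd

/-- Embed a matrix as a Euclidean vector. -/
def toE (M : Matrix n n ℂ) : EuclideanSpace ℂ (n × n) :=
  WithLp.toLp 2 (fun p : n × n => M p.1 p.2)

omit [DecidableEq n] in
lemma inner_eq_trace (U V : Matrix n n ℂ) :
    (inner ℂ (toE U) (toE V) : ℂ) = (Uᴴ * V).trace := by
  simp only [toE, PiLp.inner_apply, PiLp.toLp_apply, RCLike.inner_apply, Matrix.trace, Matrix.diag,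
    Matrix.mul_apply, conjTranspose_apply, Fintype.sum_prod_type, RCLike.star_def]
  rw [Finset.sum_comm]
  exact Finset.sum_congr rfl fun _ _ => Finset.sum_congr rfl fun _ _ => mul_comm _ _

omit [DecidableEq n] in
lemma trace_cs (X Y : Matrix n n ℂ) :
    ((Xᴴ * Y).trace).re ≤ Real.sqrt ((Xᴴ * X).trace).re * Real.sqrt ((Yᴴ * Y).trace).re := by
  have h1 := norm_inner_le_norm (𝕜 := ℂ) (toE X) (toE Y)
  rw [norm_eq_sqrt_re_inner (𝕜 := ℂ) (toE X), norm_eq_sqrt_re_inner (𝕜 := ℂ) (toE Y)] at h1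
  have h2 : ((Xᴴ * Y).trace).re ≤ ‖(inner ℂ (toE X) (toE Y) : ℂ)‖ := by
    rw [inner_eq_trace]
    exact Complex.re_le_norm _
  refine h2.trans (h1.trans_eq ?_)
  rw [inner_eq_trace, inner_eq_trace]
  rfl

lemma abs_eq_sqrt {A : Matrix n n ℂ} (hA : A.IsHermitian) :
    hA.cfc (fun x => |x|) = (posSemidef_conjTranspose_mul_self A).sqrt := by
  apply Matrix.PosSemidef.eq_sqrt_of_sq_eq (cfc_posSemidef hA _ fun x => abs_nonneg x)
  rw [pow_two, cfc_mul]
  have h : (fun x : ℝ => |x| * |x|) = fun x : ℝ => x * x := funext fun x => abs_mul_abs_self x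
  rw [h, ← cfc_mul hA (fun x => x) (fun x => x), cfc_id, hA.eq]

/-- `Re Tr(A U) ≤ Re Tr |A|` for Hermitian `A` and Hermitian involutive `U`. -/
lemma step1 {A : Matrix n n ℂ} (hA : A.IsHermitian) (U : Matrix n n ℂ)
    (hU : U.IsHermitian) (hUU : U * U = 1) :
    ((A * U).trace).re ≤ ((hA.cfc (fun x => |x|)).trace).re := by
  have hfun : (fun x : ℝ => Real.sqrt |x| * Real.sqrt |x|) = fun x : ℝ => |x| :=
    funext fun x => Real.mul_self_sqrt (abs_nonneg x)
  set rt : Matrix n n ℂ := hA.cfc (fun x => Real.sqrt |x|) with hrt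
  set W : Matrix n n ℂ := hA.cfc psgn with hWdef
  have hrtH : rtᴴ = rt := cfc_hermitian hA _
  have hWH : Wᴴ = W := cfc_hermitian hA _
  have hrtrt : rt * rt = hA.cfc (fun x => |x|) := by
    rw [hrt, cfc_mul, hfun]
  have hWabs : W * hA.cfc (fun x => |x|) = A := by
    rw [hWdef, cfc_mul, psgn_mul_abs, cfc_id]
  have hWW : W * W = 1 := by
    rw [hWdef, cfc_mul, psgn_mul_self, cfc_one]
  have habs : (0:ℝ) ≤ ((hA.cfc (fun x => |x|)).trace).re :=
    trace_re_nonneg (cfc_posSemidef hA _ fun x => abs_nonneg x)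
  clear_value rt W
  have h1 : (A * U).trace = (rtᴴ * (U * W * rt)).trace := by
    rw [hrtH, ← hWabs, ← hrtrt]
    have e : W * (rt * rt) * U = (W * rt) * (rt * U) := by noncomm_ring
    rw [e, trace_mul_comm]
    congr 1
    noncomm_ring
  have h2 : (U * W * rt)ᴴ * (U * W * rt) = hA.cfc (fun x => |x|) := by
    have e1 : (U * W * rt)ᴴ = rt * W * U := by
      rw [conjTranspose_mul, conjTranspose_mul, hrtH, hU.eq, hWH, mul_assoc]
    rw [e1]
    have e2 : rt * W * U * (U * W * rt) = rt * (W * ((U * U) * W)) * rt := by noncomm_ring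
    rw [e2, hUU, one_mul, hWW, mul_one, hrtrt]
  have hcs := trace_cs rt (U * W * rt)
  rw [h2] at hcs
  rw [hrtH, hrtrt] at hcs
  rw [h1, hrtH]
  calc ((rt * (U * W * rt)).trace).re
      ≤ Real.sqrt ((hA.cfc fun x => |x|).trace).re * Real.sqrt ((hA.cfc fun x => |x|).trace).re := hcs
    _ = ((hA.cfc fun x => |x|).trace).re := Real.mul_self_sqrt habs

/-- Powers–Størmer: `Re Tr((R-S)²) ≤ Re Tr|R² - S²|`. -/
lemma powers_stormer {R S A : Matrix n n ℂ} (hR : R.PosSemidef) (hS : S.PosSemidef)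
    (hA : A.IsHermitian) (hAeq : A = R * R - S * S) :
    (((R - S) * (R - S)).trace).re ≤ ((hA.cfc (fun x => |x|)).trace).re := by
  have hΔ : (R - S).IsHermitian := hR.1.sub hS.1
  set U : Matrix n n ℂ := hΔ.cfc psgn with hUdef
  have hU : U.IsHermitian := cfc_hermitian hΔ _
  have hUU : U * U = 1 := by rw [hUdef, cfc_mul, psgn_mul_self, cfc_one]
  set Δp : Matrix n n ℂ := hΔ.cfc (fun x => max x 0) with hΔpdef
  set Δm : Matrix n n ℂ := hΔ.cfc (fun x => max (-x) 0) with hΔmdef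
  have hΔpPSD : Δp.PosSemidef := cfc_posSemidef hΔ _ fun x => le_max_right _ _
  have hΔmPSD : Δm.PosSemidef := cfc_posSemidef hΔ _ fun x => le_max_right _ _
  have habsdec : hΔ.cfc (fun x => |x|) = Δp + Δm := by
    rw [hΔpdef, hΔmdef, cfc_add, ppart_add_npart]
  have hsubdec : R - S = Δp - Δm := by
    rw [hΔpdef, hΔmdef, cfc_sub, ppart_sub_npart, cfc_id]
  have hΔΔp : (R - S) * Δp = Δp * Δp := by
    calc (R - S) * Δp = hΔ.cfc (fun x => x) * hΔ.cfc (fun x => max x 0) := by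
          rw [cfc_id]
      _ = hΔ.cfc (fun x => x * max x 0) := cfc_mul hΔ _ _
      _ = hΔ.cfc (fun x => max x 0 * max x 0) := by rw [id_mul_ppart]
      _ = Δp * Δp := (cfc_mul hΔ _ _).symm
  have hΔΔm : (R - S) * Δm = -(Δm * Δm) := by
    calc (R - S) * Δm = hΔ.cfc (fun x => x) * hΔ.cfc (fun x => max (-x) 0) := by
          rw [cfc_id]
      _ = hΔ.cfc (fun x => x * max (-x) 0) := cfc_mul hΔ _ _
      _ = hΔ.cfc (fun x => -(max (-x) 0 * max (-x) 0)) := by rw [id_mul_npart]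
      _ = -(hΔ.cfc (fun x => max (-x) 0 * max (-x) 0)) := cfc_neg hΔ _
      _ = -(Δm * Δm) := by rw [cfc_mul]
  have hΔU : (R - S) * U = hΔ.cfc (fun x => |x|) := by
    calc (R - S) * U = hΔ.cfc (fun x => x) * hΔ.cfc psgn := by rw [cfc_id]
      _ = hΔ.cfc (fun x => x * psgn x) := cfc_mul hΔ _ _
      _ = hΔ.cfc (fun x => |x|) := by rw [id_mul_psgn]
  have hUΔ : U * (R - S) = hΔ.cfc (fun x => |x|) := by
    calc U * (R - S) = hΔ.cfc psgn * hΔ.cfc (fun x => x) := by rw [cfc_id]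
      _ = hΔ.cfc (fun x => psgn x * x) := cfc_mul hΔ _ _
      _ = hΔ.cfc (fun x => |x|) := by rw [psgn_mul_id]
  clear_value U Δp Δm
  -- Tr(A U) = Tr((R+S) |Δ|)
  have hAU : (A * U).trace = ((R + S) * hΔ.cfc (fun x => |x|)).trace := by
    have h2A : (R + S) * (R - S) + (R - S) * (R + S) = A + A := by
      rw [hAeq]; noncomm_ring
    have hfirst : ((R + S) * (R - S) * U).trace = ((R + S) * hΔ.cfc (fun x => |x|)).trace := by
      rw [mul_assoc, hΔU]
    have hsecond : ((R - S) * (R + S) * U).trace = ((R + S) * hΔ.cfc (fun x => |x|)).trace := by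
      rw [trace_mul_cycle, hUΔ, trace_mul_comm]
    have h3 : ((R + S) * (R - S) * U).trace + ((R - S) * (R + S) * U).trace
        = (A * U).trace + (A * U).trace := by
      rw [← trace_add, ← add_mul, h2A, add_mul, trace_add]
    linear_combination (hfirst + hsecond - h3) / 2
  -- Re Tr((R-S)²) ≤ Re Tr((R+S) |Δ|)
  have hB : (((R - S) * (R - S)).trace).re ≤ (((R + S) * hΔ.cfc (fun x => |x|)).trace).re := by
    have hD2 : (R - S) * (R - S) = Δp * Δp + Δm * Δm := by
      calc (R - S) * (R - S) = (R - S) * (Δp - Δm) := by rw [← hsubdec]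
        _ = (R - S) * Δp - (R - S) * Δm := by rw [mul_sub]
        _ = Δp * Δp - -(Δm * Δm) := by rw [hΔΔp, hΔΔm]
        _ = Δp * Δp + Δm * Δm := by rw [sub_neg_eq_add]
    have e1 : ((R + S) * Δp).trace = ((S + S) * Δp).trace + (Δp * Δp).trace := by
      have : (R + S) * Δp = (S + S) * Δp + (R - S) * Δp := by noncomm_ring
      rw [this, trace_add, hΔΔp]
    have e2 : ((R + S) * Δm).trace = ((R + R) * Δm).trace + (Δm * Δm).trace := by
      have h4 : (R + S) * Δm = (R + R) * Δm - (R - S) * Δm := by noncomm_ring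
      rw [h4, trace_sub, hΔΔm, trace_neg, sub_neg_eq_add]
    have n1 : 0 ≤ (((S + S) * Δp).trace).re := trace_mul_psd_re_nonneg (hS.add hS) hΔpPSD
    have n2 : 0 ≤ (((R + R) * Δm).trace).re := trace_mul_psd_re_nonneg (hR.add hR) hΔmPSD
    have etot : (((R + S) * hΔ.cfc (fun x => |x|)).trace).re
        = (((S + S) * Δp).trace).re + (((R + R) * Δm).trace).re
          + (((R - S) * (R - S)).trace).re := by
      rw [habsdec, mul_add, trace_add, hD2, trace_add]
      have r1 := congrArg Complex.re e1
      have r2 := congrArg Complex.re e2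
      simp only [Complex.add_re] at r1 r2 ⊢
      linarith
    linarith
  have hstep1 := step1 hA U hU hUU
  rw [hAU] at hstep1
  exact hB.trans hstep1


lemma ps_trace_norm_bound {R S M : Matrix n n ℂ} (hR : R.PosSemidef) (hS : S.PosSemidef)
    (hM : M.IsHermitian) (hMeq : M = R * R - S * S) :
    ((R * R).trace).re + ((S * S).trace).re - 2 * ((R * S).trace).re
      ≤ ((hM.cfc fun x => |x|).trace).re := by
  refine le_trans (le_of_eq ?_) (powers_stormer hR hS hM hMeq)
  have e1 : (R - S) * (R - S) = R * R + S * S - (R * S + S * R) := by noncomm_ring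
  rw [e1, trace_sub, trace_add, trace_add, trace_mul_comm S R]
  simp only [Complex.sub_re, Complex.add_re]
  ring

lemma main_ineq {d : ℕ} (ρ : Matrix (Fin d) (Fin d) ℂ) (hρ : ρ.PosSemidef) (hρtr : ρ.trace = 1)
    (l : ℝ) (hl : 0 ≤ l) (δ : Matrix (Fin d) (Fin d) ℂ) (hδ : δ.PosSemidef)
    (hδtr : δ.trace = 1) (hδd : δ.IsDiag) :
    1 - ∑ i, ((hρ.sqrt i i).re) ^ 2 ≤ traceNorm (ρ - l • δ) := by
  classical
  have hDnn : ∀ i, 0 ≤ (δ i i).re := fun i => (Complex.le_def.mp (diag_nonneg' hδ i)).1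
  have hδeq : δ = diagonal (fun i => ((δ i i).re : ℂ)) := by
    conv_lhs => rw [← hδd.diagonal_diag]
    exact congrArg diagonal (funext fun i => (hδ.1.coe_re_apply_self i).symm)
  set S : Matrix (Fin d) (Fin d) ℂ := diagonal (fun i => (Real.sqrt (l * (δ i i).re) : ℂ)) with hSdef
  have hS : S.PosSemidef := posSemidef_diagonal_iff.mpr fun i =>
    Complex.zero_le_real.mpr (Real.sqrt_nonneg _)
  have hSS : S * S = l • δ := by
    rw [hSdef, diagonal_mul_diagonal]
    conv_rhs => rw [hδeq]
    ext i j
    by_cases h : i = j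
    · subst h
      simp only [diagonal_apply_eq, Matrix.smul_apply]
      rw [← Complex.ofReal_mul, Real.mul_self_sqrt (mul_nonneg hl (hDnn i)),
        Complex.real_smul, ← Complex.ofReal_mul]
    · simp [diagonal_apply_ne _ h]
  have hR := hρ.posSemidef_sqrt
  have hArw : ρ - l • δ = hρ.sqrt * hρ.sqrt - S * S := by rw [hρ.sqrt_mul_self, hSS]
  have hAH : (ρ - l • δ).IsHermitian := by
    rw [hArw]
    have h1 : (hρ.sqrt * hρ.sqrt).IsHermitian := by
      simpa [hR.1.eq] using isHermitian_mul_conjTranspose_self hρ.sqrt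
    have h2 : (S * S).IsHermitian := by
      simpa [hS.1.eq] using isHermitian_mul_conjTranspose_self S
    exact h1.sub h2
  have htrn : traceNorm (ρ - l • δ) = ((hAH.cfc fun x => |x|).trace).re := by
    rw [traceNorm, ← abs_eq_sqrt hAH]
  have hkey := ps_trace_norm_bound hR hS hAH hArw
  have hRR : ((hρ.sqrt * hρ.sqrt).trace).re = 1 := by
    rw [hρ.sqrt_mul_self, hρtr]; simp
  have hSSre : ((S * S).trace).re = l := by
    rw [hSS, trace_smul, hδtr]
    simp [Complex.real_smul]
  have hRS : ((hρ.sqrt * S).trace).re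
      = ∑ i, (hρ.sqrt i i).re * Real.sqrt (l * (δ i i).re) := by
    rw [hSdef]
    have ht : (hρ.sqrt * diagonal fun i => ((Real.sqrt (l * (δ i i).re) : ℝ) : ℂ)).trace
        = ∑ i, hρ.sqrt i i * ((Real.sqrt (l * (δ i i).re) : ℝ) : ℂ) := by
      simp [Matrix.trace, Matrix.diag, Matrix.mul_diagonal]
    rw [ht, Complex.re_sum]
    exact Finset.sum_congr rfl fun i _ => by simp [Complex.mul_re]
  have hsumD : ∑ i, (δ i i).re = 1 := by
    have h0 : δ.trace = ∑ i, δ i i := rfl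
    rw [h0] at hδtr
    have h1 := congrArg Complex.re hδtr
    rw [Complex.re_sum] at h1
    simpa using h1
  set s : ℝ := ∑ i, ((hρ.sqrt i i).re) ^ 2 with hs
  have hs0 : 0 ≤ s := Finset.sum_nonneg fun i _ => sq_nonneg _
  set c : ℝ := ∑ i, (hρ.sqrt i i).re * Real.sqrt ((δ i i).re) with hc
  have hRSc : ((hρ.sqrt * S).trace).re = Real.sqrt l * c := by
    rw [hRS, hc, Finset.mul_sum]
    refine Finset.sum_congr rfl fun i _ => ?_
    rw [Real.sqrt_mul hl]
    ring
  have hc2 : c ^ 2 ≤ s := by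
    have h1 := Finset.sum_mul_sq_le_sq_mul_sq Finset.univ (fun i => (hρ.sqrt i i).re)
      (fun i => Real.sqrt ((δ i i).re))
    have h2 : ∑ i, (Real.sqrt ((δ i i).re)) ^ 2 = 1 :=
      hsumD ▸ (Finset.sum_congr rfl fun i _ => Real.sq_sqrt (hDnn i))
    rw [h2, mul_one] at h1
    rw [hc, hs]
    exact h1
  have hcs' : c ≤ Real.sqrt s := by
    nlinarith [Real.sq_sqrt hs0, Real.sqrt_nonneg s]
  have hfin : 1 + l - 2 * (Real.sqrt l * c) ≤ ((hAH.cfc fun x => |x|).trace).re := by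
    rw [hRR, hSSre, hRSc] at hkey
    exact hkey
  rw [htrn]
  have hl2 : Real.sqrt l * c ≤ Real.sqrt l * Real.sqrt s :=
    mul_le_mul_of_nonneg_left hcs' (Real.sqrt_nonneg l)
  nlinarith [Real.sq_sqrt hl, Real.sq_sqrt hs0, sq_nonneg (Real.sqrt l - Real.sqrt s), hfin, hl2]

end PS

/-- For any density matrix `ρ`, the modified trace distance measure of coherence
satisfies `C'_tr(ρ) ≥ 1 − Σ_i ((√ρ)_{ii})²`; i.e., for every `λ ≥ 0` and every
diagonal density matrix `δ`, `‖ρ − λδ‖_tr ≥ 1 − Σ_i ((√ρ)_{ii})²`. -/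
theorem modified_trace_coherence_ge {d : ℕ}
    (ρ : Matrix (Fin d) (Fin d) ℂ) (hρ : ρ.PosSemidef) (hρtr : ρ.trace = 1) :
    sInf {x : ℝ | ∃ (l : ℝ) (δ : Matrix (Fin d) (Fin d) ℂ),
        0 ≤ l ∧ δ.PosSemidef ∧ δ.trace = 1 ∧ δ.IsDiag ∧
        x = traceNorm (ρ - l • δ)}
      ≥ 1 - ∑ i, ((hρ.sqrt i i).re) ^ 2 ∧
    (∀ (l : ℝ), 0 ≤ l → ∀ (δ : Matrix (Fin d) (Fin d) ℂ), δ.PosSemidef →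
      δ.trace = 1 → δ.IsDiag →
      traceNorm (ρ - l • δ) ≥ 1 - ∑ i, ((hρ.sqrt i i).re) ^ 2) := by
  have hmain : ∀ (l : ℝ), 0 ≤ l → ∀ (δ : Matrix (Fin d) (Fin d) ℂ), δ.PosSemidef →
      δ.trace = 1 → δ.IsDiag →
      traceNorm (ρ - l • δ) ≥ 1 - ∑ i, ((hρ.sqrt i i).re) ^ 2 :=
    fun l hl δ h1 h2 h3 => PS.main_ineq ρ hρ hρtr l hl δ h1 h2 h3
  refine ⟨?_, hmain⟩
  have hd : d ≠ 0 := by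
    rintro rfl
    have h0 : ρ.trace = 0 := by simp [Matrix.trace]
    rw [h0] at hρtr
    exact zero_ne_one hρtr
  have hne : {x : ℝ | ∃ (l : ℝ) (δ : Matrix (Fin d) (Fin d) ℂ),
      0 ≤ l ∧ δ.PosSemidef ∧ δ.trace = 1 ∧ δ.IsDiag ∧
      x = traceNorm (ρ - l • δ)}.Nonempty := by
    refine ⟨traceNorm (ρ - (0:ℝ) • (diagonal fun _ : Fin d => Complex.ofReal ((d : ℝ)⁻¹))),
      0, diagonal fun _ => Complex.ofReal ((d : ℝ)⁻¹), le_refl 0, ?_, ?_, isDiag_diagonal _, rfl⟩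
    · exact posSemidef_diagonal_iff.mpr fun i => Complex.zero_le_real.mpr (by positivity)
    · have hdR : (d:ℝ) ≠ 0 := Nat.cast_ne_zero.mpr hd
      rw [trace_diagonal, Finset.sum_const, Finset.card_univ, Fintype.card_fin, nsmul_eq_mul]
      push_cast
      field_simp
  refine le_csInf hne fun b hb => ?_
  obtain ⟨l, δ, hl, h1, h2, h3, rfl⟩ := hb
  exact hmain l hl δ h1 h2 h3
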